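/- Let γ > 0, C₁ > 0 and let y, w, x⁺, ξ ∈ H satisfy the optimality relation x⁺ − y + γ∇f(w) + γξ = 0. Then f(x⁺) ≤ f(y) − γ(1 − γL/2) ‖(x⁺ − y)/γ‖² − ⟨ξ, x⁺ − y⟩ + (γL²/(2C₁)) ‖w − y‖² + (γC₁/2) ‖(x⁺ − y)/γ‖². -/

import Mathlib

open scoped RealInnerProductSpace

/-- Descent lemma: if `∇f` is `L`-Lipschitz then
`f(x) ≤ f(y) + ⟪∇f(y), x−y⟫ + L/2 ‖x−y‖²`. -/
lemma descent_lemma_aux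
    {H : Type*} [NormedAddCommGroup H] [InnerProductSpace ℝ H]
    (f : H → ℝ) (f' : H → H) (L : ℝ) (hL : 0 < L)
    (hgrad : ∀ u, HasFDerivAt f ((innerSL ℝ (f' u)) : H →L[ℝ] ℝ) u)
    (hlip : ∀ u v, ‖f' u - f' v‖ ≤ L * ‖u - v‖)
    (y x : H) :
    f x ≤ f y + ⟪f' y, x - y⟫ + L / 2 * ‖x - y‖ ^ 2 := by
  set v := x - y with hv
  set φ : ℝ → ℝ := fun t => f (y + t • v) - t * ⟪f' y, v⟫ - t ^ 2 * (L / 2 * ‖v‖ ^ 2) with hφ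
  have hderiv : ∀ t : ℝ, HasDerivAt φ
      (⟪f' (y + t • v), v⟫ - ⟪f' y, v⟫ - 2 * t * (L / 2 * ‖v‖ ^ 2)) t := by
    intro t
    have hline : HasDerivAt (fun t : ℝ => y + t • v) v t := by
      simpa using ((hasDerivAt_id t).smul_const v).const_add y
    have h1 : HasDerivAt (fun t : ℝ => f (y + t • v)) ⟪f' (y + t • v), v⟫ t := by
      exact (hgrad (y + t • v)).comp_hasDerivAt t hline
    have h2 : HasDerivAt (fun t : ℝ => t * ⟪f' y, v⟫) ⟪f' y, v⟫ t := by
      simpa using (hasDerivAt_id t).mul_const (⟪f' y, v⟫)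
    have h3 : HasDerivAt (fun t : ℝ => t ^ 2 * (L / 2 * ‖v‖ ^ 2))
        (2 * t * (L / 2 * ‖v‖ ^ 2)) t := by
      simpa using (hasDerivAt_pow 2 t).mul_const (L / 2 * ‖v‖ ^ 2)
    exact (h1.sub h2).sub h3
  have hmono : AntitoneOn φ (Set.Icc (0 : ℝ) 1) := by
    apply antitoneOn_of_deriv_nonpos (convex_Icc 0 1)
    · exact fun s _ => ((hderiv s).continuousAt.continuousWithinAt)
    · intro t ht
      exact (hderiv t).differentiableAt.differentiableWithinAt
    · intro t ht
      rw [interior_Icc] at ht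
      rw [(hderiv t).deriv]
      have hineq : ⟪f' (y + t • v) - f' y, v⟫ ≤ ‖f' (y + t • v) - f' y‖ * ‖v‖ :=
        real_inner_le_norm _ _
      have hlipt : ‖f' (y + t • v) - f' y‖ ≤ L * (t * ‖v‖) := by
        have := hlip (y + t • v) y
        simpa [norm_smul, abs_of_nonneg ht.1.le] using this
      have hnv : (0 : ℝ) ≤ ‖v‖ := norm_nonneg _
      have h1 : ⟪f' (y + t • v), v⟫ - ⟪f' y, v⟫ = ⟪f' (y + t • v) - f' y, v⟫ := by
        rw [inner_sub_left]
      nlinarith [mul_le_mul_of_nonneg_right hlipt hnv]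
  have key : φ 1 ≤ φ 0 := hmono (by norm_num) (by norm_num) (by norm_num)
  simp only [hφ, one_smul, zero_smul, add_zero, one_pow, one_mul, zero_mul, zero_pow,
    sub_zero, hv] at key
  have : y + (x - y) = x := by abel
  rw [this] at key
  linarith

/-- Descent-type inequality for a delayed-gradient proximal step: if
`x⁺ − y + γ∇f(w) + γξ = 0` and `∇f` is `L`-Lipschitz, then
`f(x⁺) ≤ f(y) − γ(1 − γL/2)‖(x⁺−y)/γ‖² − ⟨ξ, x⁺−y⟩
        + (γL²/(2C₁))‖w−y‖² + (γC₁/2)‖(x⁺−y)/γ‖²`. -/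
theorem aagd_descent_step
    {H : Type*} [NormedAddCommGroup H] [InnerProductSpace ℝ H]
    (f : H → ℝ) (f' : H → H) (L : ℝ) (hL : 0 < L)
    (hgrad : ∀ u, HasFDerivAt f ((innerSL ℝ (f' u)) : H →L[ℝ] ℝ) u)
    (hlip : ∀ u v, ‖f' u - f' v‖ ≤ L * ‖u - v‖)
    (γ C₁ : ℝ) (hγ : 0 < γ) (hC₁ : 0 < C₁)
    (y w xp ξ : H)
    (hopt : xp - y + γ • f' w + γ • ξ = 0) :
    f xp ≤ f y - γ * (1 - γ * L / 2) * ‖(1 / γ) • (xp - y)‖ ^ 2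
      - ⟪ξ, xp - y⟫ + γ * L ^ 2 / (2 * C₁) * ‖w - y‖ ^ 2
      + γ * C₁ / 2 * ‖(1 / γ) • (xp - y)‖ ^ 2 := by
  set v := xp - y with hv
  have hγ0 : γ ≠ 0 := ne_of_gt hγ
  have hdesc := descent_lemma_aux f f' L hL hgrad hlip y xp
  -- express f' w from the optimality condition
  have hfw : f' w = -((1 / γ) • v) - ξ := by
    have h1 : γ • f' w = -v - γ • ξ := by
      linear_combination (norm := module) hopt
    have := congrArg (fun z => (1 / γ) • z) h1
    simpa [smul_smul, one_div, inv_mul_cancel₀ hγ0, smul_sub, smul_neg] using this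
  -- inner product decomposition
  have hsplit : ⟪f' y, v⟫ = ⟪f' w, v⟫ + ⟪f' y - f' w, v⟫ := by
    rw [inner_sub_left]; ring
  have hfwv : ⟪f' w, v⟫ = -(1 / γ) * ‖v‖ ^ 2 - ⟪ξ, v⟫ := by
    rw [hfw, inner_sub_left, inner_neg_left, real_inner_smul_left, real_inner_self_eq_norm_sq]
    ring
  -- Young's inequality for the cross term
  have hcross : ⟪f' y - f' w, v⟫ ≤ γ * L ^ 2 / (2 * C₁) * ‖w - y‖ ^ 2
      + C₁ / (2 * γ) * ‖v‖ ^ 2 := by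
    have h1 : ⟪f' y - f' w, v⟫ ≤ ‖f' y - f' w‖ * ‖v‖ := real_inner_le_norm _ _
    have h2 : ‖f' y - f' w‖ ≤ L * ‖y - w‖ := hlip y w
    have h3 : ‖y - w‖ = ‖w - y‖ := norm_sub_rev _ _
    have hnv : (0 : ℝ) ≤ ‖v‖ := norm_nonneg _
    have hnw : (0 : ℝ) ≤ ‖w - y‖ := norm_nonneg _
    have hyoung : L * ‖w - y‖ * ‖v‖ ≤ γ * L ^ 2 / (2 * C₁) * ‖w - y‖ ^ 2
        + C₁ / (2 * γ) * ‖v‖ ^ 2 := by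
      have ha : Real.sqrt (γ / C₁) ^ 2 = γ / C₁ := Real.sq_sqrt (by positivity)
      have hb : Real.sqrt (C₁ / γ) ^ 2 = C₁ / γ := Real.sq_sqrt (by positivity)
      have hab : Real.sqrt (γ / C₁) * Real.sqrt (C₁ / γ) = 1 := by
        rw [← Real.sqrt_mul (by positivity)]
        rw [div_mul_div_comm, mul_comm γ C₁, div_self (by positivity)]
        exact Real.sqrt_one
      have htm := two_mul_le_add_sq (Real.sqrt (γ / C₁) * (L * ‖w - y‖))
        (Real.sqrt (C₁ / γ) * ‖v‖)
      have e1 : (Real.sqrt (γ / C₁) * (L * ‖w - y‖)) ^ 2 = γ / C₁ * (L * ‖w - y‖) ^ 2 := by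
        rw [mul_pow, ha]
      have e2 : (Real.sqrt (C₁ / γ) * ‖v‖) ^ 2 = C₁ / γ * ‖v‖ ^ 2 := by
        rw [mul_pow, hb]
      have e3 : 2 * (Real.sqrt (γ / C₁) * (L * ‖w - y‖)) * (Real.sqrt (C₁ / γ) * ‖v‖)
          = 2 * (L * ‖w - y‖ * ‖v‖) := by
        calc 2 * (Real.sqrt (γ / C₁) * (L * ‖w - y‖)) * (Real.sqrt (C₁ / γ) * ‖v‖)
            = (Real.sqrt (γ / C₁) * Real.sqrt (C₁ / γ)) * (2 * (L * ‖w - y‖ * ‖v‖)) := by ring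
          _ = 2 * (L * ‖w - y‖ * ‖v‖) := by rw [hab]; ring
      rw [e1, e2, e3] at htm
      have e4 : γ / C₁ * (L * ‖w - y‖) ^ 2 = 2 * (γ * L ^ 2 / (2 * C₁) * ‖w - y‖ ^ 2) := by
        field_simp
      have e5 : C₁ / γ * ‖v‖ ^ 2 = 2 * (C₁ / (2 * γ) * ‖v‖ ^ 2) := by
        field_simp
      linarith
    calc ⟪f' y - f' w, v⟫ ≤ ‖f' y - f' w‖ * ‖v‖ := h1
      _ ≤ L * ‖w - y‖ * ‖v‖ := by rw [← h3]; exact mul_le_mul_of_nonneg_right h2 hnv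
      _ ≤ _ := hyoung
  -- rewrite the scaled norm
  have hsn : ‖(1 / γ) • v‖ ^ 2 = (1 / γ ^ 2) * ‖v‖ ^ 2 := by
    rw [norm_smul, mul_pow, Real.norm_eq_abs, sq_abs]
    ring
  rw [hsn]
  have hγ2 : γ ^ 2 ≠ 0 := pow_ne_zero _ hγ0
  have h1 : γ * (1 - γ * L / 2) * (1 / γ ^ 2 * ‖v‖ ^ 2)
      = (1 / γ) * ‖v‖ ^ 2 - L / 2 * ‖v‖ ^ 2 := by
    field_simp
  have h2 : γ * C₁ / 2 * (1 / γ ^ 2 * ‖v‖ ^ 2) = C₁ / (2 * γ) * ‖v‖ ^ 2 := by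
    field_simp
  rw [h1, h2]
  linarith [hdesc, hsplit ▸ (by linarith [hcross, hfwv.le] :
    ⟪f' w, v⟫ + ⟪f' y - f' w, v⟫ ≤ -(1 / γ) * ‖v‖ ^ 2 - ⟪ξ, v⟫
      + γ * L ^ 2 / (2 * C₁) * ‖w - y‖ ^ 2 + C₁ / (2 * γ) * ‖v‖ ^ 2)]
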